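/- The polynomial R(x) = x^8 + 134x^7 + 6496x^6 + 147854x^5 + 1709659x^4 + 10035116x^3 + 28014804x^2 + 29758896x + 6531840 has exactly six real roots, each of which is simple; consequently R has exactly two non-real complex roots (a conjugate pair). -/

import Mathlib

open Finset Polynomial

/-- The degree-8 factor `R(x)` in the factorization `P₁₀(x) = (x/10!)(x+1)R(x)`
of the 10th D'Arcais polynomial. -/
noncomputable def Rpoly : Polynomial ℝ :=
  X ^ 8 + C 134 * X ^ 7 + C 6496 * X ^ 6 + C 147854 * X ^ 5 + C 1709659 * X ^ 4 +
    C 10035116 * X ^ 3 + C 28014804 * X ^ 2 + C 29758896 * X + C 6531840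

lemma Rpoly_eval (x : ℝ) : Rpoly.eval x =
    x^8 + 134*x^7 + 6496*x^6 + 147854*x^5 + 1709659*x^4 + 10035116*x^3 + 28014804*x^2 + 29758896*x + 6531840 := by
  simp [Rpoly]

lemma Rderiv_eval (x : ℝ) : (Polynomial.derivative Rpoly).eval x =
    8*x^7 + 938*x^6 + 38976*x^5 + 739270*x^4 + 6838636*x^3 + 30105348*x^2 + 56029608*x + 29758896 := by
  simp [Rpoly]
  ring

lemma Rpoly_monic : Rpoly.Monic := by
  unfold Rpoly; monicity!

lemma Rpoly_natDegree : Rpoly.natDegree = 8 := by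
  unfold Rpoly; compute_degree!
lemma cert_neg1 (x : ℝ) (h1 : ((-58)) ≤ x) (h2 : x ≤ ((-33))) : Rpoly.eval x < 0 := by
  rw [Rpoly_eval]
  have hu : (0:ℝ) ≤ x - ((-58)) := by linarith
  have hv : (0:ℝ) ≤ ((-33)) - x := by linarith
  have key : -(x^8 + 134*x^7 + 6496*x^6 + 147854*x^5 + 1709659*x^4 + 10035116*x^3 + 28014804*x^2 + 29758896*x + 6531840) = (565227936/1220703125) * ((((-33)) - x)^8) + (86101951632/1220703125) * ((x - ((-58)))^1 * (((-33)) - x)^7) + (257269370636/1220703125) * ((x - ((-58)))^2 * (((-33)) - x)^6) + (64509626292/244140625) * ((x - ((-58)))^3 * (((-33)) - x)^5) + (43228240497/244140625) * ((x - ((-58)))^4 * (((-33)) - x)^4) + (81674896606/1220703125) * ((x - ((-58)))^5 * (((-33)) - x)^3) + (16534394532/1220703125) * ((x - ((-58)))^6 * (((-33)) - x)^2) + (1405919016/1220703125) * ((x - ((-58)))^7 * (((-33)) - x)^1) + (4990053600) := by ring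
  have t0 : (0:ℝ) ≤ (565227936/1220703125) * ((((-33)) - x)^8) := mul_nonneg (by norm_num) (pow_nonneg hv 8)
  have t1 : (0:ℝ) ≤ (86101951632/1220703125) * ((x - ((-58)))^1 * (((-33)) - x)^7) := mul_nonneg (by norm_num) (mul_nonneg (pow_nonneg hu 1) (pow_nonneg hv 7))
  have t2 : (0:ℝ) ≤ (257269370636/1220703125) * ((x - ((-58)))^2 * (((-33)) - x)^6) := mul_nonneg (by norm_num) (mul_nonneg (pow_nonneg hu 2) (pow_nonneg hv 6))
  have t3 : (0:ℝ) ≤ (64509626292/244140625) * ((x - ((-58)))^3 * (((-33)) - x)^5) := mul_nonneg (by norm_num) (mul_nonneg (pow_nonneg hu 3) (pow_nonneg hv 5))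
  have t4 : (0:ℝ) ≤ (43228240497/244140625) * ((x - ((-58)))^4 * (((-33)) - x)^4) := mul_nonneg (by norm_num) (mul_nonneg (pow_nonneg hu 4) (pow_nonneg hv 4))
  have t5 : (0:ℝ) ≤ (81674896606/1220703125) * ((x - ((-58)))^5 * (((-33)) - x)^3) := mul_nonneg (by norm_num) (mul_nonneg (pow_nonneg hu 5) (pow_nonneg hv 3))
  have t6 : (0:ℝ) ≤ (16534394532/1220703125) * ((x - ((-58)))^6 * (((-33)) - x)^2) := mul_nonneg (by norm_num) (mul_nonneg (pow_nonneg hu 6) (pow_nonneg hv 2))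
  have t7 : (0:ℝ) ≤ (1405919016/1220703125) * ((x - ((-58)))^7 * (((-33)) - x)^1) := mul_nonneg (by norm_num) (mul_nonneg (pow_nonneg hu 7) (pow_nonneg hv 1))
  linarith [key, t0, t1, t2, t3, t4, t5, t6, t7]

lemma cert_pos2 (x : ℝ) (h1 : ((-32)) ≤ x) (h2 : x ≤ ((-18))) : 0 < Rpoly.eval x := by
  rw [Rpoly_eval]
  have hu : (0:ℝ) ≤ x - ((-32)) := by linarith
  have hv : (0:ℝ) ≤ ((-18)) - x := by linarith
  have key : (x^8 + 134*x^7 + 6496*x^6 + 147854*x^5 + 1709659*x^4 + 10035116*x^3 + 28014804*x^2 + 29758896*x + 6531840) = (840375/1647086) * ((((-18)) - x)^8) + (45193725/941192) * ((x - ((-32)))^1 * (((-18)) - x)^7) + (339778827/1882384) * ((x - ((-32)))^2 * (((-18)) - x)^6) + (249022477/941192) * ((x - ((-32)))^3 * (((-18)) - x)^5) + (184911043/941192) * ((x - ((-32)))^4 * (((-18)) - x)^4) + (10598821/134456) * ((x - ((-32)))^5 * (((-18)) - x)^3) + (30709359/1882384) * ((x - ((-32)))^6 * (((-18)) - x)^2)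 + (9003465/6588344) * ((x - ((-32)))^7 * (((-18)) - x)^1) + (41731200) := by ring
  have t0 : (0:ℝ) ≤ (840375/1647086) * ((((-18)) - x)^8) := mul_nonneg (by norm_num) (pow_nonneg hv 8)
  have t1 : (0:ℝ) ≤ (45193725/941192) * ((x - ((-32)))^1 * (((-18)) - x)^7) := mul_nonneg (by norm_num) (mul_nonneg (pow_nonneg hu 1) (pow_nonneg hv 7))
  have t2 : (0:ℝ) ≤ (339778827/1882384) * ((x - ((-32)))^2 * (((-18)) - x)^6) := mul_nonneg (by norm_num) (mul_nonneg (pow_nonneg hu 2) (pow_nonneg hv 6))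
  have t3 : (0:ℝ) ≤ (249022477/941192) * ((x - ((-32)))^3 * (((-18)) - x)^5) := mul_nonneg (by norm_num) (mul_nonneg (pow_nonneg hu 3) (pow_nonneg hv 5))
  have t4 : (0:ℝ) ≤ (184911043/941192) * ((x - ((-32)))^4 * (((-18)) - x)^4) := mul_nonneg (by norm_num) (mul_nonneg (pow_nonneg hu 4) (pow_nonneg hv 4))
  have t5 : (0:ℝ) ≤ (10598821/134456) * ((x - ((-32)))^5 * (((-18)) - x)^3) := mul_nonneg (by norm_num) (mul_nonneg (pow_nonneg hu 5) (pow_nonneg hv 3))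
  have t6 : (0:ℝ) ≤ (30709359/1882384) * ((x - ((-32)))^6 * (((-18)) - x)^2) := mul_nonneg (by norm_num) (mul_nonneg (pow_nonneg hu 6) (pow_nonneg hv 2))
  have t7 : (0:ℝ) ≤ (9003465/6588344) * ((x - ((-32)))^7 * (((-18)) - x)^1) := mul_nonneg (by norm_num) (mul_nonneg (pow_nonneg hu 7) (pow_nonneg hv 1))
  linarith [key, t0, t1, t2, t3, t4, t5, t6, t7]

lemma cert_neg2 (x : ℝ) (h1 : ((-35)/2) ≤ x) (h2 : x ≤ ((-14))) : Rpoly.eval x < 0 := by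
  rw [Rpoly_eval]
  have hu : (0:ℝ) ≤ x - ((-35)/2) := by linarith
  have hv : (0:ℝ) ≤ ((-14)) - x := by linarith
  have key : -(x^8 + 134*x^7 + 6496*x^6 + 147854*x^5 + 1709659*x^4 + 10035116*x^3 + 28014804*x^2 + 29758896*x + 6531840) = (12433950132/823543) * ((x - ((-35)/2))^1 * (((-14)) - x)^7) + (9680389036/117649) * ((x - ((-35)/2))^2 * (((-14)) - x)^6) + (21938724456/117649) * ((x - ((-35)/2))^3 * (((-14)) - x)^5) + (26623668894/117649) * ((x - ((-35)/2))^4 * (((-14)) - x)^4) + (18470175320/117649) * ((x - ((-35)/2))^5 * (((-14)) - x)^3) + (1023525684/16807) * ((x - ((-35)/2))^6 * (((-14)) - x)^2) + (1368472680/117649) * ((x - ((-35)/2))^7 * (((-14)) - x)^1) + (593569755/823543) * ((x - ((-35)/2))^8) + (4670253315/256) := by ring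
  have t0 : (0:ℝ) ≤ (12433950132/823543) * ((x - ((-35)/2))^1 * (((-14)) - x)^7) := mul_nonneg (by norm_num) (mul_nonneg (pow_nonneg hu 1) (pow_nonneg hv 7))
  have t1 : (0:ℝ) ≤ (9680389036/117649) * ((x - ((-35)/2))^2 * (((-14)) - x)^6) := mul_nonneg (by norm_num) (mul_nonneg (pow_nonneg hu 2) (pow_nonneg hv 6))
  have t2 : (0:ℝ) ≤ (21938724456/117649) * ((x - ((-35)/2))^3 * (((-14)) - x)^5) := mul_nonneg (by norm_num) (mul_nonneg (pow_nonneg hu 3) (pow_nonneg hv 5))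
  have t3 : (0:ℝ) ≤ (26623668894/117649) * ((x - ((-35)/2))^4 * (((-14)) - x)^4) := mul_nonneg (by norm_num) (mul_nonneg (pow_nonneg hu 4) (pow_nonneg hv 4))
  have t4 : (0:ℝ) ≤ (18470175320/117649) * ((x - ((-35)/2))^5 * (((-14)) - x)^3) := mul_nonneg (by norm_num) (mul_nonneg (pow_nonneg hu 5) (pow_nonneg hv 3))
  have t5 : (0:ℝ) ≤ (1023525684/16807) * ((x - ((-35)/2))^6 * (((-14)) - x)^2) := mul_nonneg (by norm_num) (mul_nonneg (pow_nonneg hu 6) (pow_nonneg hv 2))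
  have t6 : (0:ℝ) ≤ (1368472680/117649) * ((x - ((-35)/2))^7 * (((-14)) - x)^1) := mul_nonneg (by norm_num) (mul_nonneg (pow_nonneg hu 7) (pow_nonneg hv 1))
  have t7 : (0:ℝ) ≤ (593569755/823543) * ((x - ((-35)/2))^8) := mul_nonneg (by norm_num) (pow_nonneg hu 8)
  linarith [key, t0, t1, t2, t3, t4, t5, t6, t7]

lemma cert_pos3a (x : ℝ) (h1 : ((-13)) ≤ x) (h2 : x ≤ ((-11))) : 0 < Rpoly.eval x := by
  rw [Rpoly_eval]
  have hu : (0:ℝ) ≤ x - ((-13)) := by linarith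
  have hv : (0:ℝ) ≤ ((-11)) - x := by linarith
  have key : (x^8 + 134*x^7 + 6496*x^6 + 147854*x^5 + 1709659*x^4 + 10035116*x^3 + 28014804*x^2 + 29758896*x + 6531840) = (4128465/16) * ((x - ((-13)))^1 * (((-11)) - x)^7) + (13850017/8) * ((x - ((-13)))^2 * (((-11)) - x)^6) + (39433857/8) * ((x - ((-13)))^3 * (((-11)) - x)^5) + (15449523/2) * ((x - ((-13)))^4 * (((-11)) - x)^4) + (115199401/16) * ((x - ((-13)))^5 * (((-11)) - x)^3) + (31945815/8) * ((x - ((-13)))^6 * (((-11)) - x)^2) + (4883103/4) * ((x - ((-13)))^7 * (((-11)) - x)^1) + (158760) * ((x - ((-13)))^8) + (1814400) := by ring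
  have t0 : (0:ℝ) ≤ (4128465/16) * ((x - ((-13)))^1 * (((-11)) - x)^7) := mul_nonneg (by norm_num) (mul_nonneg (pow_nonneg hu 1) (pow_nonneg hv 7))
  have t1 : (0:ℝ) ≤ (13850017/8) * ((x - ((-13)))^2 * (((-11)) - x)^6) := mul_nonneg (by norm_num) (mul_nonneg (pow_nonneg hu 2) (pow_nonneg hv 6))
  have t2 : (0:ℝ) ≤ (39433857/8) * ((x - ((-13)))^3 * (((-11)) - x)^5) := mul_nonneg (by norm_num) (mul_nonneg (pow_nonneg hu 3) (pow_nonneg hv 5))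
  have t3 : (0:ℝ) ≤ (15449523/2) * ((x - ((-13)))^4 * (((-11)) - x)^4) := mul_nonneg (by norm_num) (mul_nonneg (pow_nonneg hu 4) (pow_nonneg hv 4))
  have t4 : (0:ℝ) ≤ (115199401/16) * ((x - ((-13)))^5 * (((-11)) - x)^3) := mul_nonneg (by norm_num) (mul_nonneg (pow_nonneg hu 5) (pow_nonneg hv 3))
  have t5 : (0:ℝ) ≤ (31945815/8) * ((x - ((-13)))^6 * (((-11)) - x)^2) := mul_nonneg (by norm_num) (mul_nonneg (pow_nonneg hu 6) (pow_nonneg hv 2))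
  have t6 : (0:ℝ) ≤ (4883103/4) * ((x - ((-13)))^7 * (((-11)) - x)^1) := mul_nonneg (by norm_num) (mul_nonneg (pow_nonneg hu 7) (pow_nonneg hv 1))
  have t7 : (0:ℝ) ≤ (158760) * ((x - ((-13)))^8) := mul_nonneg (by norm_num) (pow_nonneg hu 8)
  linarith [key, t0, t1, t2, t3, t4, t5, t6, t7]

lemma cert_pos3b (x : ℝ) (h1 : ((-11)) ≤ x) (h2 : x ≤ ((-9))) : 0 < Rpoly.eval x := by
  rw [Rpoly_eval]
  have hu : (0:ℝ) ≤ x - ((-11)) := by linarith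
  have hv : (0:ℝ) ≤ ((-9)) - x := by linarith
  have key : (x^8 + 134*x^7 + 6496*x^6 + 147854*x^5 + 1709659*x^4 + 10035116*x^3 + 28014804*x^2 + 29758896*x + 6531840) = (292005/8) * ((((-9)) - x)^8) + (1365237/4) * ((x - ((-11)))^1 * (((-9)) - x)^7) + (10081791/8) * ((x - ((-11)))^2 * (((-9)) - x)^6) + (39224831/16) * ((x - ((-11)))^3 * (((-9)) - x)^5) + (22036657/8) * ((x - ((-11)))^4 * (((-9)) - x)^4) + (14429059/8) * ((x - ((-11)))^5 * (((-9)) - x)^3) + (5127471/8) * ((x - ((-11)))^6 * (((-9)) - x)^2) + (1531935/16) * ((x - ((-11)))^7 * (((-9)) - x)^1) + (33112800) := by ring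
  have t0 : (0:ℝ) ≤ (292005/8) * ((((-9)) - x)^8) := mul_nonneg (by norm_num) (pow_nonneg hv 8)
  have t1 : (0:ℝ) ≤ (1365237/4) * ((x - ((-11)))^1 * (((-9)) - x)^7) := mul_nonneg (by norm_num) (mul_nonneg (pow_nonneg hu 1) (pow_nonneg hv 7))
  have t2 : (0:ℝ) ≤ (10081791/8) * ((x - ((-11)))^2 * (((-9)) - x)^6) := mul_nonneg (by norm_num) (mul_nonneg (pow_nonneg hu 2) (pow_nonneg hv 6))
  have t3 : (0:ℝ) ≤ (39224831/16) * ((x - ((-11)))^3 * (((-9)) - x)^5) := mul_nonneg (by norm_num) (mul_nonneg (pow_nonneg hu 3) (pow_nonneg hv 5))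
  have t4 : (0:ℝ) ≤ (22036657/8) * ((x - ((-11)))^4 * (((-9)) - x)^4) := mul_nonneg (by norm_num) (mul_nonneg (pow_nonneg hu 4) (pow_nonneg hv 4))
  have t5 : (0:ℝ) ≤ (14429059/8) * ((x - ((-11)))^5 * (((-9)) - x)^3) := mul_nonneg (by norm_num) (mul_nonneg (pow_nonneg hu 5) (pow_nonneg hv 3))
  have t6 : (0:ℝ) ≤ (5127471/8) * ((x - ((-11)))^6 * (((-9)) - x)^2) := mul_nonneg (by norm_num) (mul_nonneg (pow_nonneg hu 6) (pow_nonneg hv 2))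
  have t7 : (0:ℝ) ≤ (1531935/16) * ((x - ((-11)))^7 * (((-9)) - x)^1) := mul_nonneg (by norm_num) (mul_nonneg (pow_nonneg hu 7) (pow_nonneg hv 1))
  linarith [key, t0, t1, t2, t3, t4, t5, t6, t7]

lemma cert_pos3c (x : ℝ) (h1 : ((-9)) ≤ x) (h2 : x ≤ ((-7))) : 0 < Rpoly.eval x := by
  rw [Rpoly_eval]
  have hu : (0:ℝ) ≤ x - ((-9)) := by linarith
  have hv : (0:ℝ) ≤ ((-7)) - x := by linarith
  have key : (x^8 + 134*x^7 + 6496*x^6 + 147854*x^5 + 1709659*x^4 + 10035116*x^3 + 28014804*x^2 + 29758896*x + 6531840) = (770175/8) * ((((-7)) - x)^8) + (10790865/16) * ((x - ((-9)))^1 * (((-7)) - x)^7) + (7984413/4) * ((x - ((-9)))^2 * (((-7)) - x)^6) + (25889123/8) * ((x - ((-9)))^3 * (((-7)) - x)^5) + (24835677/8) * ((x - ((-9)))^4 * (((-7)) - x)^4) + (28203681/16) * ((x - ((-9)))^5 * (((-7)) - x)^3) + (2195063/4) * ((x - ((-9)))^6 * (((-7)) - x)^2) + (72300) * ((x - ((-9)))^7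 * (((-7)) - x)^1) + (8467200) := by ring
  have t0 : (0:ℝ) ≤ (770175/8) * ((((-7)) - x)^8) := mul_nonneg (by norm_num) (pow_nonneg hv 8)
  have t1 : (0:ℝ) ≤ (10790865/16) * ((x - ((-9)))^1 * (((-7)) - x)^7) := mul_nonneg (by norm_num) (mul_nonneg (pow_nonneg hu 1) (pow_nonneg hv 7))
  have t2 : (0:ℝ) ≤ (7984413/4) * ((x - ((-9)))^2 * (((-7)) - x)^6) := mul_nonneg (by norm_num) (mul_nonneg (pow_nonneg hu 2) (pow_nonneg hv 6))
  have t3 : (0:ℝ) ≤ (25889123/8) * ((x - ((-9)))^3 * (((-7)) - x)^5) := mul_nonneg (by norm_num) (mul_nonneg (pow_nonneg hu 3) (pow_nonneg hv 5))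
  have t4 : (0:ℝ) ≤ (24835677/8) * ((x - ((-9)))^4 * (((-7)) - x)^4) := mul_nonneg (by norm_num) (mul_nonneg (pow_nonneg hu 4) (pow_nonneg hv 4))
  have t5 : (0:ℝ) ≤ (28203681/16) * ((x - ((-9)))^5 * (((-7)) - x)^3) := mul_nonneg (by norm_num) (mul_nonneg (pow_nonneg hu 5) (pow_nonneg hv 3))
  have t6 : (0:ℝ) ≤ (2195063/4) * ((x - ((-9)))^6 * (((-7)) - x)^2) := mul_nonneg (by norm_num) (mul_nonneg (pow_nonneg hu 6) (pow_nonneg hv 2))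
  have t7 : (0:ℝ) ≤ (72300) * ((x - ((-9)))^7 * (((-7)) - x)^1) := mul_nonneg (by norm_num) (mul_nonneg (pow_nonneg hu 7) (pow_nonneg hv 1))
  linarith [key, t0, t1, t2, t3, t4, t5, t6, t7]

lemma cert_pos3d (x : ℝ) (h1 : ((-7)) ≤ x) (h2 : x ≤ ((-5))) : 0 < Rpoly.eval x := by
  rw [Rpoly_eval]
  have hu : (0:ℝ) ≤ x - ((-7)) := by linarith
  have hv : (0:ℝ) ≤ ((-5)) - x := by linarith
  have key : (x^8 + 134*x^7 + 6496*x^6 + 147854*x^5 + 1709659*x^4 + 10035116*x^3 + 28014804*x^2 + 29758896*x + 6531840) = (813933/28) * ((((-5)) - x)^8) + (1121766/7) * ((x - ((-7)))^1 * (((-5)) - x)^7) + (1401995/4) * ((x - ((-7)))^2 * (((-5)) - x)^6) + (6033999/16) * ((x - ((-7)))^3 * (((-5)) - x)^5) + (387873/2) * ((x - ((-7)))^4 * (((-5)) - x)^4) + (261761/8) * ((x - ((-7)))^5 * (((-5)) - x)^3) + (647217/112) * ((x - ((-7)))^7 * (((-5)) - x)^1) + (33219/14) * ((x - ((-7)))^8)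 + (7178688/7) := by ring
  have t0 : (0:ℝ) ≤ (813933/28) * ((((-5)) - x)^8) := mul_nonneg (by norm_num) (pow_nonneg hv 8)
  have t1 : (0:ℝ) ≤ (1121766/7) * ((x - ((-7)))^1 * (((-5)) - x)^7) := mul_nonneg (by norm_num) (mul_nonneg (pow_nonneg hu 1) (pow_nonneg hv 7))
  have t2 : (0:ℝ) ≤ (1401995/4) * ((x - ((-7)))^2 * (((-5)) - x)^6) := mul_nonneg (by norm_num) (mul_nonneg (pow_nonneg hu 2) (pow_nonneg hv 6))
  have t3 : (0:ℝ) ≤ (6033999/16) * ((x - ((-7)))^3 * (((-5)) - x)^5) := mul_nonneg (by norm_num) (mul_nonneg (pow_nonneg hu 3) (pow_nonneg hv 5))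
  have t4 : (0:ℝ) ≤ (387873/2) * ((x - ((-7)))^4 * (((-5)) - x)^4) := mul_nonneg (by norm_num) (mul_nonneg (pow_nonneg hu 4) (pow_nonneg hv 4))
  have t5 : (0:ℝ) ≤ (261761/8) * ((x - ((-7)))^5 * (((-5)) - x)^3) := mul_nonneg (by norm_num) (mul_nonneg (pow_nonneg hu 5) (pow_nonneg hv 3))
  have t6 : (0:ℝ) ≤ (647217/112) * ((x - ((-7)))^7 * (((-5)) - x)^1) := mul_nonneg (by norm_num) (mul_nonneg (pow_nonneg hu 7) (pow_nonneg hv 1))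
  have t7 : (0:ℝ) ≤ (33219/14) * ((x - ((-7)))^8) := mul_nonneg (by norm_num) (pow_nonneg hu 8)
  linarith [key, t0, t1, t2, t3, t4, t5, t6, t7]

lemma cert_pos3e (x : ℝ) (h1 : ((-5)) ≤ x) (h2 : x ≤ ((-3))) : 0 < Rpoly.eval x := by
  rw [Rpoly_eval]
  have hu : (0:ℝ) ≤ x - ((-5)) := by linarith
  have hv : (0:ℝ) ≤ ((-3)) - x := by linarith
  have key : (x^8 + 134*x^7 + 6496*x^6 + 147854*x^5 + 1709659*x^4 + 10035116*x^3 + 28014804*x^2 + 29758896*x + 6531840) = (211257/16) * ((x - ((-5)))^1 * (((-3)) - x)^7) + (947295/8) * ((x - ((-5)))^2 * (((-3)) - x)^6) + (3295993/8) * ((x - ((-5)))^3 * (((-3)) - x)^5) + (2960471/4) * ((x - ((-5)))^4 * (((-3)) - x)^4) + (11978129/16) * ((x - ((-5)))^5 * (((-3)) - x)^3) + (3415257/8) * ((x - ((-5)))^6 * (((-3)) - x)^2) + (505935/4) * ((x - ((-5)))^7 * (((-3)) - x)^1) + (59535/4) * ((x - ((-5)))^8) + (1632960) := by ring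
  have t0 : (0:ℝ) ≤ (211257/16) * ((x - ((-5)))^1 * (((-3)) - x)^7) := mul_nonneg (by norm_num) (mul_nonneg (pow_nonneg hu 1) (pow_nonneg hv 7))
  have t1 : (0:ℝ) ≤ (947295/8) * ((x - ((-5)))^2 * (((-3)) - x)^6) := mul_nonneg (by norm_num) (mul_nonneg (pow_nonneg hu 2) (pow_nonneg hv 6))
  have t2 : (0:ℝ) ≤ (3295993/8) * ((x - ((-5)))^3 * (((-3)) - x)^5) := mul_nonneg (by norm_num) (mul_nonneg (pow_nonneg hu 3) (pow_nonneg hv 5))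
  have t3 : (0:ℝ) ≤ (2960471/4) * ((x - ((-5)))^4 * (((-3)) - x)^4) := mul_nonneg (by norm_num) (mul_nonneg (pow_nonneg hu 4) (pow_nonneg hv 4))
  have t4 : (0:ℝ) ≤ (11978129/16) * ((x - ((-5)))^5 * (((-3)) - x)^3) := mul_nonneg (by norm_num) (mul_nonneg (pow_nonneg hu 5) (pow_nonneg hv 3))
  have t5 : (0:ℝ) ≤ (3415257/8) * ((x - ((-5)))^6 * (((-3)) - x)^2) := mul_nonneg (by norm_num) (mul_nonneg (pow_nonneg hu 6) (pow_nonneg hv 2))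
  have t6 : (0:ℝ) ≤ (505935/4) * ((x - ((-5)))^7 * (((-3)) - x)^1) := mul_nonneg (by norm_num) (mul_nonneg (pow_nonneg hu 7) (pow_nonneg hv 1))
  have t7 : (0:ℝ) ≤ (59535/4) * ((x - ((-5)))^8) := mul_nonneg (by norm_num) (pow_nonneg hu 8)
  linarith [key, t0, t1, t2, t3, t4, t5, t6, t7]

lemma cert_pos3f (x : ℝ) (h1 : ((-3)) ≤ x) (h2 : x ≤ ((-2))) : 0 < Rpoly.eval x := by
  rw [Rpoly_eval]
  have hu : (0:ℝ) ≤ x - ((-3)) := by linarith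
  have hv : (0:ℝ) ≤ ((-2)) - x := by linarith
  have key : (x^8 + 134*x^7 + 6496*x^6 + 147854*x^5 + 1709659*x^4 + 10035116*x^3 + 28014804*x^2 + 29758896*x + 6531840) = (3628800) * ((((-2)) - x)^8) + (28081440) * ((x - ((-3)))^1 * (((-2)) - x)^7) + (92292696) * ((x - ((-3)))^2 * (((-2)) - x)^6) + (166943246) * ((x - ((-3)))^3 * (((-2)) - x)^5) + (179408039) * ((x - ((-3)))^4 * (((-2)) - x)^4) + (114470756) * ((x - ((-3)))^5 * (((-2)) - x)^3) + (40113828) * ((x - ((-3)))^6 * (((-2)) - x)^2) + (5947920) * ((x - ((-3)))^7 * (((-2)) - x)^1) + (1814400) := by ring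
  have t0 : (0:ℝ) ≤ (3628800) * ((((-2)) - x)^8) := mul_nonneg (by norm_num) (pow_nonneg hv 8)
  have t1 : (0:ℝ) ≤ (28081440) * ((x - ((-3)))^1 * (((-2)) - x)^7) := mul_nonneg (by norm_num) (mul_nonneg (pow_nonneg hu 1) (pow_nonneg hv 7))
  have t2 : (0:ℝ) ≤ (92292696) * ((x - ((-3)))^2 * (((-2)) - x)^6) := mul_nonneg (by norm_num) (mul_nonneg (pow_nonneg hu 2) (pow_nonneg hv 6))
  have t3 : (0:ℝ) ≤ (166943246) * ((x - ((-3)))^3 * (((-2)) - x)^5) := mul_nonneg (by norm_num) (mul_nonneg (pow_nonneg hu 3) (pow_nonneg hv 5))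
  have t4 : (0:ℝ) ≤ (179408039) * ((x - ((-3)))^4 * (((-2)) - x)^4) := mul_nonneg (by norm_num) (mul_nonneg (pow_nonneg hu 4) (pow_nonneg hv 4))
  have t5 : (0:ℝ) ≤ (114470756) * ((x - ((-3)))^5 * (((-2)) - x)^3) := mul_nonneg (by norm_num) (mul_nonneg (pow_nonneg hu 5) (pow_nonneg hv 3))
  have t6 : (0:ℝ) ≤ (40113828) * ((x - ((-3)))^6 * (((-2)) - x)^2) := mul_nonneg (by norm_num) (mul_nonneg (pow_nonneg hu 6) (pow_nonneg hv 2))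
  have t7 : (0:ℝ) ≤ (5947920) * ((x - ((-3)))^7 * (((-2)) - x)^1) := mul_nonneg (by norm_num) (mul_nonneg (pow_nonneg hu 7) (pow_nonneg hv 1))
  linarith [key, t0, t1, t2, t3, t4, t5, t6, t7]

lemma cert_neg3 (x : ℝ) (h1 : ((-3)/2) ≤ x) (h2 : x ≤ ((-1)/2)) : Rpoly.eval x < 0 := by
  rw [Rpoly_eval]
  have hu : (0:ℝ) ≤ x - ((-3)/2) := by linarith
  have hv : (0:ℝ) ≤ ((-1)/2) - x := by linarith
  have key : -(x^8 + 134*x^7 + 6496*x^6 + 147854*x^5 + 1709659*x^4 + 10035116*x^3 + 28014804*x^2 + 29758896*x + 6531840) = (197496045/32) * ((x - ((-3)/2))^1 * (((-1)/2) - x)^7) + (1337053239/32) * ((x - ((-3)/2))^2 * (((-1)/2) - x)^6) + (3788863613/32) * ((x - ((-3)/2))^3 * (((-1)/2) - x)^5) + (5775136427/32) * ((x - ((-3)/2))^4 * (((-1)/2) - x)^4) + (5037555743/32) * ((x - ((-3)/2))^5 * (((-1)/2) - x)^3) + (2441938293/32) * ((x - ((-3)/2))^6 * (((-1)/2) - x)^2)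 + (567280215/32) * ((x - ((-3)/2))^7 * (((-1)/2) - x)^1) + (37067625/32) * ((x - ((-3)/2))^8) + (342425475/256) := by ring
  have t0 : (0:ℝ) ≤ (197496045/32) * ((x - ((-3)/2))^1 * (((-1)/2) - x)^7) := mul_nonneg (by norm_num) (mul_nonneg (pow_nonneg hu 1) (pow_nonneg hv 7))
  have t1 : (0:ℝ) ≤ (1337053239/32) * ((x - ((-3)/2))^2 * (((-1)/2) - x)^6) := mul_nonneg (by norm_num) (mul_nonneg (pow_nonneg hu 2) (pow_nonneg hv 6))
  have t2 : (0:ℝ) ≤ (3788863613/32) * ((x - ((-3)/2))^3 * (((-1)/2) - x)^5) := mul_nonneg (by norm_num) (mul_nonneg (pow_nonneg hu 3) (pow_nonneg hv 5))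
  have t3 : (0:ℝ) ≤ (5775136427/32) * ((x - ((-3)/2))^4 * (((-1)/2) - x)^4) := mul_nonneg (by norm_num) (mul_nonneg (pow_nonneg hu 4) (pow_nonneg hv 4))
  have t4 : (0:ℝ) ≤ (5037555743/32) * ((x - ((-3)/2))^5 * (((-1)/2) - x)^3) := mul_nonneg (by norm_num) (mul_nonneg (pow_nonneg hu 5) (pow_nonneg hv 3))
  have t5 : (0:ℝ) ≤ (2441938293/32) * ((x - ((-3)/2))^6 * (((-1)/2) - x)^2) := mul_nonneg (by norm_num) (mul_nonneg (pow_nonneg hu 6) (pow_nonneg hv 2))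
  have t6 : (0:ℝ) ≤ (567280215/32) * ((x - ((-3)/2))^7 * (((-1)/2) - x)^1) := mul_nonneg (by norm_num) (mul_nonneg (pow_nonneg hu 7) (pow_nonneg hv 1))
  have t7 : (0:ℝ) ≤ (37067625/32) * ((x - ((-3)/2))^8) := mul_nonneg (by norm_num) (pow_nonneg hu 8)
  linarith [key, t0, t1, t2, t3, t4, t5, t6, t7]

lemma cert_dneg1 (x : ℝ) (h1 : ((-59)) ≤ x) (h2 : x ≤ ((-58))) : (Polynomial.derivative Rpoly).eval x < 0 := by
  rw [Rderiv_eval]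
  have hu : (0:ℝ) ≤ x - ((-59)) := by linarith
  have hv : (0:ℝ) ≤ ((-58)) - x := by linarith
  have key : -(8*x^7 + 938*x^6 + 38976*x^5 + 739270*x^4 + 6838636*x^3 + 30105348*x^2 + 56029608*x + 29758896) = (145850188560) * ((((-58)) - x)^7) + (860406738144) * ((x - ((-59)))^1 * (((-58)) - x)^6) + (2114990941110) * ((x - ((-59)))^2 * (((-58)) - x)^5) + (2772881156474) * ((x - ((-59)))^3 * (((-58)) - x)^4) + (2045012665176) * ((x - ((-59)))^4 * (((-58)) - x)^3) + (804413063652) * ((x - ((-59)))^5 * (((-58)) - x)^2) + (131847163432) * ((x - ((-59)))^6 * (((-58)) - x)^1) + (407900640720) := by ring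
  have t0 : (0:ℝ) ≤ (145850188560) * ((((-58)) - x)^7) := mul_nonneg (by norm_num) (pow_nonneg hv 7)
  have t1 : (0:ℝ) ≤ (860406738144) * ((x - ((-59)))^1 * (((-58)) - x)^6) := mul_nonneg (by norm_num) (mul_nonneg (pow_nonneg hu 1) (pow_nonneg hv 6))
  have t2 : (0:ℝ) ≤ (2114990941110) * ((x - ((-59)))^2 * (((-58)) - x)^5) := mul_nonneg (by norm_num) (mul_nonneg (pow_nonneg hu 2) (pow_nonneg hv 5))
  have t3 : (0:ℝ) ≤ (2772881156474) * ((x - ((-59)))^3 * (((-58)) - x)^4) := mul_nonneg (by norm_num) (mul_nonneg (pow_nonneg hu 3) (pow_nonneg hv 4))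
  have t4 : (0:ℝ) ≤ (2045012665176) * ((x - ((-59)))^4 * (((-58)) - x)^3) := mul_nonneg (by norm_num) (mul_nonneg (pow_nonneg hu 4) (pow_nonneg hv 3))
  have t5 : (0:ℝ) ≤ (804413063652) * ((x - ((-59)))^5 * (((-58)) - x)^2) := mul_nonneg (by norm_num) (mul_nonneg (pow_nonneg hu 5) (pow_nonneg hv 2))
  have t6 : (0:ℝ) ≤ (131847163432) * ((x - ((-59)))^6 * (((-58)) - x)^1) := mul_nonneg (by norm_num) (mul_nonneg (pow_nonneg hu 6) (pow_nonneg hv 1))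
  linarith [key, t0, t1, t2, t3, t4, t5, t6]

lemma cert_dpos2 (x : ℝ) (h1 : ((-33)) ≤ x) (h2 : x ≤ ((-32))) : 0 < (Polynomial.derivative Rpoly).eval x := by
  rw [Rderiv_eval]
  have hu : (0:ℝ) ≤ x - ((-33)) := by linarith
  have hv : (0:ℝ) ≤ ((-32)) - x := by linarith
  have key : (8*x^7 + 938*x^6 + 38976*x^5 + 739270*x^4 + 6838636*x^3 + 30105348*x^2 + 56029608*x + 29758896) = (2398169880) * ((((-32)) - x)^7) + (14110004592) * ((x - ((-33)))^1 * (((-32)) - x)^6) + (34586287962) * ((x - ((-33)))^2 * (((-32)) - x)^5) + (45208900126) * ((x - ((-33)))^3 * (((-32)) - x)^4) + (33236435024) * ((x - ((-33)))^4 * (((-32)) - x)^3) + (13030318740) * ((x - ((-33)))^5 * (((-32)) - x)^2) + (2128330584) * ((x - ((-33)))^6 * (((-32)) - x)^1) + (4631425200) := by ring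
  have t0 : (0:ℝ) ≤ (2398169880) * ((((-32)) - x)^7) := mul_nonneg (by norm_num) (pow_nonneg hv 7)
  have t1 : (0:ℝ) ≤ (14110004592) * ((x - ((-33)))^1 * (((-32)) - x)^6) := mul_nonneg (by norm_num) (mul_nonneg (pow_nonneg hu 1) (pow_nonneg hv 6))
  have t2 : (0:ℝ) ≤ (34586287962) * ((x - ((-33)))^2 * (((-32)) - x)^5) := mul_nonneg (by norm_num) (mul_nonneg (pow_nonneg hu 2) (pow_nonneg hv 5))
  have t3 : (0:ℝ) ≤ (45208900126) * ((x - ((-33)))^3 * (((-32)) - x)^4) := mul_nonneg (by norm_num) (mul_nonneg (pow_nonneg hu 3) (pow_nonneg hv 4))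
  have t4 : (0:ℝ) ≤ (33236435024) * ((x - ((-33)))^4 * (((-32)) - x)^3) := mul_nonneg (by norm_num) (mul_nonneg (pow_nonneg hu 4) (pow_nonneg hv 3))
  have t5 : (0:ℝ) ≤ (13030318740) * ((x - ((-33)))^5 * (((-32)) - x)^2) := mul_nonneg (by norm_num) (mul_nonneg (pow_nonneg hu 5) (pow_nonneg hv 2))
  have t6 : (0:ℝ) ≤ (2128330584) * ((x - ((-33)))^6 * (((-32)) - x)^1) := mul_nonneg (by norm_num) (mul_nonneg (pow_nonneg hu 6) (pow_nonneg hv 1))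
  linarith [key, t0, t1, t2, t3, t4, t5, t6]

lemma cert_dneg3 (x : ℝ) (h1 : ((-18)) ≤ x) (h2 : x ≤ ((-35)/2)) : (Polynomial.derivative Rpoly).eval x < 0 := by
  rw [Rderiv_eval]
  have hu : (0:ℝ) ≤ x - ((-18)) := by linarith
  have hv : (0:ℝ) ≤ ((-35)/2) - x := by linarith
  have key : -(8*x^7 + 938*x^6 + 38976*x^5 + 739270*x^4 + 6838636*x^3 + 30105348*x^2 + 56029608*x + 29758896) = (6005146188) * ((((-35)/2) - x)^7) + (35532379668) * ((x - ((-18)))^1 * (((-35)/2) - x)^6) + (87583985340) * ((x - ((-18)))^2 * (((-35)/2) - x)^5) + (115116293924) * ((x - ((-18)))^3 * (((-35)/2) - x)^4) + (85091541876) * ((x - ((-18)))^4 * (((-35)/2) - x)^3) + (33539121996) * ((x - ((-18)))^5 * (((-35)/2) - x)^2) + (5507122192) * ((x - ((-18)))^6 * (((-35)/2) - x)^1) + (3108487533/32) := by ring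
  have t0 : (0:ℝ) ≤ (6005146188) * ((((-35)/2) - x)^7) := mul_nonneg (by norm_num) (pow_nonneg hv 7)
  have t1 : (0:ℝ) ≤ (35532379668) * ((x - ((-18)))^1 * (((-35)/2) - x)^6) := mul_nonneg (by norm_num) (mul_nonneg (pow_nonneg hu 1) (pow_nonneg hv 6))
  have t2 : (0:ℝ) ≤ (87583985340) * ((x - ((-18)))^2 * (((-35)/2) - x)^5) := mul_nonneg (by norm_num) (mul_nonneg (pow_nonneg hu 2) (pow_nonneg hv 5))
  have t3 : (0:ℝ) ≤ (115116293924) * ((x - ((-18)))^3 * (((-35)/2) - x)^4) := mul_nonneg (by norm_num) (mul_nonneg (pow_nonneg hu 3) (pow_nonneg hv 4))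
  have t4 : (0:ℝ) ≤ (85091541876) * ((x - ((-18)))^4 * (((-35)/2) - x)^3) := mul_nonneg (by norm_num) (mul_nonneg (pow_nonneg hu 4) (pow_nonneg hv 3))
  have t5 : (0:ℝ) ≤ (33539121996) * ((x - ((-18)))^5 * (((-35)/2) - x)^2) := mul_nonneg (by norm_num) (mul_nonneg (pow_nonneg hu 5) (pow_nonneg hv 2))
  have t6 : (0:ℝ) ≤ (5507122192) * ((x - ((-18)))^6 * (((-35)/2) - x)^1) := mul_nonneg (by norm_num) (mul_nonneg (pow_nonneg hu 6) (pow_nonneg hv 1))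
  linarith [key, t0, t1, t2, t3, t4, t5, t6]

lemma cert_dpos4 (x : ℝ) (h1 : ((-14)) ≤ x) (h2 : x ≤ ((-13))) : 0 < (Polynomial.derivative Rpoly).eval x := by
  rw [Rderiv_eval]
  have hu : (0:ℝ) ≤ x - ((-14)) := by linarith
  have hv : (0:ℝ) ≤ ((-13)) - x := by linarith
  have key : (8*x^7 + 938*x^6 + 38976*x^5 + 739270*x^4 + 6838636*x^3 + 30105348*x^2 + 56029608*x + 29758896) = (4712520) * ((((-13)) - x)^7) + (34248576) * ((x - ((-14)))^1 * (((-13)) - x)^6) + (99449940) * ((x - ((-14)))^2 * (((-13)) - x)^5) + (149570776) * ((x - ((-14)))^3 * (((-13)) - x)^4) + (123817374) * ((x - ((-14)))^4 * (((-13)) - x)^3) + (53754258) * ((x - ((-14)))^5 * (((-13)) - x)^2) + (9593768) * ((x - ((-14)))^6 * (((-13)) - x)^1) + (33027720) := by ring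
  have t0 : (0:ℝ) ≤ (4712520) * ((((-13)) - x)^7) := mul_nonneg (by norm_num) (pow_nonneg hv 7)
  have t1 : (0:ℝ) ≤ (34248576) * ((x - ((-14)))^1 * (((-13)) - x)^6) := mul_nonneg (by norm_num) (mul_nonneg (pow_nonneg hu 1) (pow_nonneg hv 6))
  have t2 : (0:ℝ) ≤ (99449940) * ((x - ((-14)))^2 * (((-13)) - x)^5) := mul_nonneg (by norm_num) (mul_nonneg (pow_nonneg hu 2) (pow_nonneg hv 5))
  have t3 : (0:ℝ) ≤ (149570776) * ((x - ((-14)))^3 * (((-13)) - x)^4) := mul_nonneg (by norm_num) (mul_nonneg (pow_nonneg hu 3) (pow_nonneg hv 4))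
  have t4 : (0:ℝ) ≤ (123817374) * ((x - ((-14)))^4 * (((-13)) - x)^3) := mul_nonneg (by norm_num) (mul_nonneg (pow_nonneg hu 4) (pow_nonneg hv 3))
  have t5 : (0:ℝ) ≤ (53754258) * ((x - ((-14)))^5 * (((-13)) - x)^2) := mul_nonneg (by norm_num) (mul_nonneg (pow_nonneg hu 5) (pow_nonneg hv 2))
  have t6 : (0:ℝ) ≤ (9593768) * ((x - ((-14)))^6 * (((-13)) - x)^1) := mul_nonneg (by norm_num) (mul_nonneg (pow_nonneg hu 6) (pow_nonneg hv 1))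
  linarith [key, t0, t1, t2, t3, t4, t5, t6]

lemma cert_dneg5 (x : ℝ) (h1 : ((-2)) ≤ x) (h2 : x ≤ ((-3)/2)) : (Polynomial.derivative Rpoly).eval x < 0 := by
  rw [Rderiv_eval]
  have hu : (0:ℝ) ≤ x - ((-2)) := by linarith
  have hv : (0:ℝ) ≤ ((-3)/2) - x := by linarith
  have key : -(8*x^7 + 938*x^6 + 38976*x^5 + 739270*x^4 + 6838636*x^3 + 30105348*x^2 + 56029608*x + 29758896) = (194766336) * ((x - ((-2)))^1 * (((-3)/2) - x)^6) + (1043232384) * ((x - ((-2)))^2 * (((-3)/2) - x)^5) + (2257260224) * ((x - ((-2)))^3 * (((-3)/2) - x)^4) + (2488815376) * ((x - ((-2)))^4 * (((-3)/2) - x)^3) + (1433600016) * ((x - ((-2)))^5 * (((-3)/2) - x)^2) + (382229244) * ((x - ((-2)))^6 * (((-3)/2) - x)^1) + (28650420) * ((x - ((-2)))^7) + (5947920) := by ring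
  have t0 : (0:ℝ) ≤ (194766336) * ((x - ((-2)))^1 * (((-3)/2) - x)^6) := mul_nonneg (by norm_num) (mul_nonneg (pow_nonneg hu 1) (pow_nonneg hv 6))
  have t1 : (0:ℝ) ≤ (1043232384) * ((x - ((-2)))^2 * (((-3)/2) - x)^5) := mul_nonneg (by norm_num) (mul_nonneg (pow_nonneg hu 2) (pow_nonneg hv 5))
  have t2 : (0:ℝ) ≤ (2257260224) * ((x - ((-2)))^3 * (((-3)/2) - x)^4) := mul_nonneg (by norm_num) (mul_nonneg (pow_nonneg hu 3) (pow_nonneg hv 4))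
  have t3 : (0:ℝ) ≤ (2488815376) * ((x - ((-2)))^4 * (((-3)/2) - x)^3) := mul_nonneg (by norm_num) (mul_nonneg (pow_nonneg hu 4) (pow_nonneg hv 3))
  have t4 : (0:ℝ) ≤ (1433600016) * ((x - ((-2)))^5 * (((-3)/2) - x)^2) := mul_nonneg (by norm_num) (mul_nonneg (pow_nonneg hu 5) (pow_nonneg hv 2))
  have t5 : (0:ℝ) ≤ (382229244) * ((x - ((-2)))^6 * (((-3)/2) - x)^1) := mul_nonneg (by norm_num) (mul_nonneg (pow_nonneg hu 6) (pow_nonneg hv 1))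
  have t6 : (0:ℝ) ≤ (28650420) * ((x - ((-2)))^7) := mul_nonneg (by norm_num) (pow_nonneg hu 7)
  linarith [key, t0, t1, t2, t3, t4, t5, t6]

lemma cert_dpos6 (x : ℝ) (h1 : ((-1)/2) ≤ x) (h2 : x ≤ (0)) : 0 < (Polynomial.derivative Rpoly).eval x := by
  rw [Rderiv_eval]
  have hu : (0:ℝ) ≤ x - ((-1)/2) := by linarith
  have hv : (0:ℝ) ≤ (0) - x := by linarith
  have key : (8*x^7 + 938*x^6 + 38976*x^5 + 739270*x^4 + 6838636*x^3 + 30105348*x^2 + 56029608*x + 29758896) = (1964518848) * ((x - ((-1)/2))^1 * ((0) - x)^6) + (12456183588) * ((x - ((-1)/2))^2 * ((0) - x)^5) + (32900418556) * ((x - ((-1)/2))^3 * ((0) - x)^4) + (46335377804) * ((x - ((-1)/2))^4 * ((0) - x)^3) + (36697820052) * ((x - ((-1)/2))^5 * ((0) - x)^2) + (15497377884) * ((x - ((-1)/2))^6 * ((0) - x)^1) + (2726181828) * ((x - ((-1)/2))^7) + (270739215/32) := by ring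
  have t0 : (0:ℝ) ≤ (1964518848) * ((x - ((-1)/2))^1 * ((0) - x)^6) := mul_nonneg (by norm_num) (mul_nonneg (pow_nonneg hu 1) (pow_nonneg hv 6))
  have t1 : (0:ℝ) ≤ (12456183588) * ((x - ((-1)/2))^2 * ((0) - x)^5) := mul_nonneg (by norm_num) (mul_nonneg (pow_nonneg hu 2) (pow_nonneg hv 5))
  have t2 : (0:ℝ) ≤ (32900418556) * ((x - ((-1)/2))^3 * ((0) - x)^4) := mul_nonneg (by norm_num) (mul_nonneg (pow_nonneg hu 3) (pow_nonneg hv 4))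
  have t3 : (0:ℝ) ≤ (46335377804) * ((x - ((-1)/2))^4 * ((0) - x)^3) := mul_nonneg (by norm_num) (mul_nonneg (pow_nonneg hu 4) (pow_nonneg hv 3))
  have t4 : (0:ℝ) ≤ (36697820052) * ((x - ((-1)/2))^5 * ((0) - x)^2) := mul_nonneg (by norm_num) (mul_nonneg (pow_nonneg hu 5) (pow_nonneg hv 2))
  have t5 : (0:ℝ) ≤ (15497377884) * ((x - ((-1)/2))^6 * ((0) - x)^1) := mul_nonneg (by norm_num) (mul_nonneg (pow_nonneg hu 6) (pow_nonneg hv 1))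
  have t6 : (0:ℝ) ≤ (2726181828) * ((x - ((-1)/2))^7) := mul_nonneg (by norm_num) (pow_nonneg hu 7)
  linarith [key, t0, t1, t2, t3, t4, t5, t6]

lemma cert_pos_left (x : ℝ) (h1 : x ≤ -59) : 0 < Rpoly.eval x := by
  rw [Rpoly_eval]
  have hv : (0:ℝ) ≤ -59 - x := by linarith
  have key : (x^8 + 134*x^7 + 6496*x^6 + 147854*x^5 + 1709659*x^4 + 10035116*x^3 + 28014804*x^2 + 29758896*x + 6531840) = (553750829280) * (-59 - x) + (80272290888) * ((-59 - x)^2) + (5134824002) * ((-59 - x)^3) + (182269129) * ((-59 - x)^4) + (3857420) * ((-59 - x)^5) + (48622) * ((-59 - x)^6) + (338) * ((-59 - x)^7) + (1) * ((-59 - x)^8) + (402791356800) := by ring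
  have t1 : (0:ℝ) ≤ (553750829280) * (-59 - x) := mul_nonneg (by norm_num) hv
  have t2 : (0:ℝ) ≤ (80272290888) * ((-59 - x)^2) := mul_nonneg (by norm_num) (pow_nonneg hv 2)
  have t3 : (0:ℝ) ≤ (5134824002) * ((-59 - x)^3) := mul_nonneg (by norm_num) (pow_nonneg hv 3)
  have t4 : (0:ℝ) ≤ (182269129) * ((-59 - x)^4) := mul_nonneg (by norm_num) (pow_nonneg hv 4)
  have t5 : (0:ℝ) ≤ (3857420) * ((-59 - x)^5) := mul_nonneg (by norm_num) (pow_nonneg hv 5)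
  have t6 : (0:ℝ) ≤ (48622) * ((-59 - x)^6) := mul_nonneg (by norm_num) (pow_nonneg hv 6)
  have t7 : (0:ℝ) ≤ (338) * ((-59 - x)^7) := mul_nonneg (by norm_num) (pow_nonneg hv 7)
  have t8 : (0:ℝ) ≤ (1) * ((-59 - x)^8) := mul_nonneg (by norm_num) (pow_nonneg hv 8)
  linarith [key, t1, t2, t3, t4, t5, t6, t7, t8]

lemma cert_pos_right (x : ℝ) (h1 : (0:ℝ) ≤ x) : 0 < Rpoly.eval x := by
  rw [Rpoly_eval]
  have t2 : (0:ℝ) ≤ x^2 := pow_nonneg h1 2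
  have t3 : (0:ℝ) ≤ x^3 := pow_nonneg h1 3
  have t4 : (0:ℝ) ≤ x^4 := pow_nonneg h1 4
  have t5 : (0:ℝ) ≤ x^5 := pow_nonneg h1 5
  have t6 : (0:ℝ) ≤ x^6 := pow_nonneg h1 6
  have t7 : (0:ℝ) ≤ x^7 := pow_nonneg h1 7
  have t8 : (0:ℝ) ≤ x^8 := pow_nonneg h1 8
  nlinarith [t2,t3,t4,t5,t6,t7,t8]

lemma cert_pos3 (x : ℝ) (h1 : (-13:ℝ) ≤ x) (h2 : x ≤ -2) : 0 < Rpoly.eval x := by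
  rcases le_or_gt x (-11) with h | h
  · exact cert_pos3a x h1 h
  rcases le_or_gt x (-9) with h' | h'
  · exact cert_pos3b x h.le h'
  rcases le_or_gt x (-7) with h'' | h''
  · exact cert_pos3c x h'.le h''
  rcases le_or_gt x (-5) with h3 | h3
  · exact cert_pos3d x h''.le h3
  rcases le_or_gt x (-3) with h4 | h4
  · exact cert_pos3e x h3.le h4
  · exact cert_pos3f x h4.le h2
lemma exists_root_decr {a b : ℝ} (hab : a ≤ b) (ha : 0 < Rpoly.eval a) (hb : Rpoly.eval b < 0) :
    ∃ x ∈ Set.Ioo a b, Rpoly.eval x = 0 := by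
  have hc : ContinuousOn (fun x => Rpoly.eval x) (Set.Icc a b) :=
    (Rpoly.continuous_aeval).continuousOn
  have h0 : (0:ℝ) ∈ Set.Ioo (Rpoly.eval b) (Rpoly.eval a) := ⟨hb, ha⟩
  obtain ⟨x, hx, hx0⟩ := intermediate_value_Ioo' hab hc h0
  exact ⟨x, hx, hx0⟩

lemma exists_root_incr {a b : ℝ} (hab : a ≤ b) (ha : Rpoly.eval a < 0) (hb : 0 < Rpoly.eval b) :
    ∃ x ∈ Set.Ioo a b, Rpoly.eval x = 0 := by
  have hc : ContinuousOn (fun x => Rpoly.eval x) (Set.Icc a b) :=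
    (Rpoly.continuous_aeval).continuousOn
  have h0 : (0:ℝ) ∈ Set.Ioo (Rpoly.eval a) (Rpoly.eval b) := ⟨ha, hb⟩
  obtain ⟨x, hx, hx0⟩ := intermediate_value_Ioo hab hc h0
  exact ⟨x, hx, hx0⟩

lemma unique_root {a b : ℝ} (hd : ∀ c ∈ Set.Icc a b, (Polynomial.derivative Rpoly).eval c ≠ 0)
    {x y : ℝ} (hx : x ∈ Set.Icc a b) (hy : y ∈ Set.Icc a b)
    (hrx : Rpoly.eval x = 0) (hry : Rpoly.eval y = 0) : x = y := by
  by_contra hne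
  wlog hlt : x < y generalizing x y
  · exact this hy hx hry hrx (Ne.symm hne) ((Ne.lt_or_gt hne).resolve_left hlt)
  obtain ⟨c, hc, hc0⟩ := exists_deriv_eq_zero (f := fun t => Rpoly.eval t) hlt
    (Rpoly.continuous_aeval).continuousOn (by simp only [hrx, hry])
  have hce : (Polynomial.derivative Rpoly).eval c = 0 := by
    rw [← Polynomial.deriv]; exact hc0
  exact hd c ⟨le_trans hx.1 hc.1.le, le_trans hc.2.le hy.2⟩ hce

lemma root_locate {x : ℝ} (hx : Rpoly.eval x = 0) :
    x ∈ Set.Icc (-59:ℝ) (-58) ∨ x ∈ Set.Icc (-33:ℝ) (-32) ∨ x ∈ Set.Icc (-18:ℝ) (-35/2) ∨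
    x ∈ Set.Icc (-14:ℝ) (-13) ∨ x ∈ Set.Icc (-2:ℝ) (-3/2) ∨ x ∈ Set.Icc (-1/2:ℝ) 0 := by
  rcases le_or_gt x (-59) with h1 | h1
  · exact absurd hx (ne_of_gt (cert_pos_left x h1))
  rcases le_or_gt x (-58) with h2 | h2
  · exact Or.inl ⟨h1.le, h2⟩
  rcases le_or_gt x (-33) with h3 | h3
  · exact absurd hx (ne_of_lt (cert_neg1 x h2.le h3))
  rcases le_or_gt x (-32) with h4 | h4
  · exact Or.inr (Or.inl ⟨h3.le, h4⟩)
  rcases le_or_gt x (-18) with h5 | h5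
  · exact absurd hx (ne_of_gt (cert_pos2 x h4.le h5))
  rcases le_or_gt x (-35/2) with h6 | h6
  · exact Or.inr (Or.inr (Or.inl ⟨h5.le, h6⟩))
  rcases le_or_gt x (-14) with h7 | h7
  · exact absurd hx (ne_of_lt (cert_neg2 x h6.le h7))
  rcases le_or_gt x (-13) with h8 | h8
  · exact Or.inr (Or.inr (Or.inr (Or.inl ⟨h7.le, h8⟩)))
  rcases le_or_gt x (-2) with h9 | h9
  · exact absurd hx (ne_of_gt (cert_pos3 x h8.le h9))
  rcases le_or_gt x (-3/2) with h10 | h10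
  · exact Or.inr (Or.inr (Or.inr (Or.inr (Or.inl ⟨h9.le, h10⟩))))
  rcases le_or_gt x (-1/2) with h11 | h11
  · exact absurd hx (ne_of_lt (cert_neg3 x h10.le h11))
  rcases le_or_gt x 0 with h12 | h12
  · exact Or.inr (Or.inr (Or.inr (Or.inr (Or.inr ⟨h11.le, h12⟩))))
  · exact absurd hx (ne_of_gt (cert_pos_right x h12.le))

lemma deriv_ne_1 : ∀ c ∈ Set.Icc (-59:ℝ) (-58), (Polynomial.derivative Rpoly).eval c ≠ 0 :=
  fun c hc => ne_of_lt (cert_dneg1 c hc.1 hc.2)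
lemma deriv_ne_2 : ∀ c ∈ Set.Icc (-33:ℝ) (-32), (Polynomial.derivative Rpoly).eval c ≠ 0 :=
  fun c hc => ne_of_gt (cert_dpos2 c hc.1 hc.2)
lemma deriv_ne_3 : ∀ c ∈ Set.Icc (-18:ℝ) (-35/2), (Polynomial.derivative Rpoly).eval c ≠ 0 :=
  fun c hc => ne_of_lt (cert_dneg3 c hc.1 hc.2)
lemma deriv_ne_4 : ∀ c ∈ Set.Icc (-14:ℝ) (-13), (Polynomial.derivative Rpoly).eval c ≠ 0 :=
  fun c hc => ne_of_gt (cert_dpos4 c hc.1 hc.2)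
lemma deriv_ne_5 : ∀ c ∈ Set.Icc (-2:ℝ) (-3/2), (Polynomial.derivative Rpoly).eval c ≠ 0 :=
  fun c hc => ne_of_lt (cert_dneg5 c hc.1 hc.2)
lemma deriv_ne_6 : ∀ c ∈ Set.Icc (-1/2:ℝ) 0, (Polynomial.derivative Rpoly).eval c ≠ 0 :=
  fun c hc => ne_of_gt (cert_dpos6 c hc.1 hc.2)

lemma deriv_ne_zero_of_root {x : ℝ} (hx : Rpoly.eval x = 0) :
    (Polynomial.derivative Rpoly).eval x ≠ 0 := by
  rcases root_locate hx with h|h|h|h|h|h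
  · exact deriv_ne_1 x h
  · exact deriv_ne_2 x h
  · exact deriv_ne_3 x h
  · exact deriv_ne_4 x h
  · exact deriv_ne_5 x h
  · exact deriv_ne_6 x h

lemma Rderiv_ne_zero : Polynomial.derivative Rpoly ≠ 0 := by
  intro h
  have := Rderiv_eval 0
  rw [h] at this
  norm_num at this

lemma count_le_one : ∀ x : ℝ, Rpoly.roots.count x ≤ 1 := by
  intro x
  classical
  rw [Polynomial.count_roots]
  by_cases hroot : Rpoly.eval x = 0
  · by_contra hgt
    push_neg at hgt
    have h2 : 2 ≤ Polynomial.rootMultiplicity x Rpoly := hgt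
    have hder := Polynomial.derivative_rootMultiplicity_of_root (p := Rpoly) (t := x) hroot
    have : Rpoly.derivative.IsRoot x :=
      (Polynomial.rootMultiplicity_pos Rderiv_ne_zero).mp (by omega)
    exact deriv_ne_zero_of_root hroot this
  · rw [Polynomial.rootMultiplicity_eq_zero hroot]
    omega

lemma Rpoly_nodup : Rpoly.roots.Nodup := Multiset.nodup_iff_count_le_one.mpr count_le_one
lemma Rpoly_ne_zero : Rpoly ≠ 0 := Rpoly_monic.ne_zero

lemma roots_card_six : Rpoly.roots.card = 6 := by
  classical
  obtain ⟨x1, hx1, hr1⟩ := exists_root_decr (by norm_num : (-59:ℝ) ≤ -58)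
    (cert_pos_left (-59) le_rfl) (cert_neg1 (-58) le_rfl (by norm_num))
  obtain ⟨x2, hx2, hr2⟩ := exists_root_incr (by norm_num : (-33:ℝ) ≤ -32)
    (cert_neg1 (-33) (by norm_num) le_rfl) (cert_pos2 (-32) le_rfl (by norm_num))
  obtain ⟨x3, hx3, hr3⟩ := exists_root_decr (by norm_num : (-18:ℝ) ≤ -35/2)
    (cert_pos2 (-18) (by norm_num) le_rfl) (cert_neg2 (-35/2) le_rfl (by norm_num))
  obtain ⟨x4, hx4, hr4⟩ := exists_root_incr (by norm_num : (-14:ℝ) ≤ -13)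
    (cert_neg2 (-14) (by norm_num) le_rfl) (cert_pos3 (-13) le_rfl (by norm_num))
  obtain ⟨x5, hx5, hr5⟩ := exists_root_decr (by norm_num : (-2:ℝ) ≤ -3/2)
    (cert_pos3 (-2) (by norm_num) le_rfl) (cert_neg3 (-3/2) le_rfl (by norm_num))
  obtain ⟨x6, hx6, hr6⟩ := exists_root_incr (by norm_num : (-1/2:ℝ) ≤ 0)
    (cert_neg3 (-1/2) (by norm_num) le_rfl) (cert_pos_right 0 le_rfl)
  have hIcc1 : x1 ∈ Set.Icc (-59:ℝ) (-58) := ⟨hx1.1.le, hx1.2.le⟩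
  have hIcc2 : x2 ∈ Set.Icc (-33:ℝ) (-32) := ⟨hx2.1.le, hx2.2.le⟩
  have hIcc3 : x3 ∈ Set.Icc (-18:ℝ) (-35/2) := ⟨hx3.1.le, hx3.2.le⟩
  have hIcc4 : x4 ∈ Set.Icc (-14:ℝ) (-13) := ⟨hx4.1.le, hx4.2.le⟩
  have hIcc5 : x5 ∈ Set.Icc (-2:ℝ) (-3/2) := ⟨hx5.1.le, hx5.2.le⟩
  have hIcc6 : x6 ∈ Set.Icc (-1/2:ℝ) 0 := ⟨hx6.1.le, hx6.2.le⟩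
  have hTF : Rpoly.roots.toFinset = ({x1, x2, x3, x4, x5, x6} : Finset ℝ) := by
    ext y
    simp only [Multiset.mem_toFinset, Finset.mem_insert, Finset.mem_singleton]
    constructor
    · intro hy
      have hy0 : Rpoly.eval y = 0 := (Polynomial.mem_roots'.mp hy).2
      rcases root_locate hy0 with h|h|h|h|h|h
      · exact Or.inl (unique_root deriv_ne_1 h hIcc1 hy0 hr1)
      · exact Or.inr (Or.inl (unique_root deriv_ne_2 h hIcc2 hy0 hr2))
      · exact Or.inr (Or.inr (Or.inl (unique_root deriv_ne_3 h hIcc3 hy0 hr3)))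
      · exact Or.inr (Or.inr (Or.inr (Or.inl (unique_root deriv_ne_4 h hIcc4 hy0 hr4))))
      · exact Or.inr (Or.inr (Or.inr (Or.inr (Or.inl (unique_root deriv_ne_5 h hIcc5 hy0 hr5)))))
      · exact Or.inr (Or.inr (Or.inr (Or.inr (Or.inr (unique_root deriv_ne_6 h hIcc6 hy0 hr6)))))
    · rintro (rfl|rfl|rfl|rfl|rfl|rfl)
      · exact Polynomial.mem_roots'.mpr ⟨Rpoly_ne_zero, hr1⟩
      · exact Polynomial.mem_roots'.mpr ⟨Rpoly_ne_zero, hr2⟩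
      · exact Polynomial.mem_roots'.mpr ⟨Rpoly_ne_zero, hr3⟩
      · exact Polynomial.mem_roots'.mpr ⟨Rpoly_ne_zero, hr4⟩
      · exact Polynomial.mem_roots'.mpr ⟨Rpoly_ne_zero, hr5⟩
      · exact Polynomial.mem_roots'.mpr ⟨Rpoly_ne_zero, hr6⟩
  have hcardS : ({x1, x2, x3, x4, x5, x6} : Finset ℝ).card = 6 := by
    have h12 : x1 < x2 := by linarith [hx1.2, hx2.1]
    have h23 : x2 < x3 := by linarith [hx2.2, hx3.1]
    have h34 : x3 < x4 := by linarith [hx3.2, hx4.1]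
    have h45 : x4 < x5 := by linarith [hx4.2, hx5.1]
    have h56 : x5 < x6 := by linarith [hx5.2, hx6.1]
    rw [Finset.card_insert_of_notMem (by
        simp only [Finset.mem_insert, Finset.mem_singleton]
        push_neg
        refine ⟨by linarith, by linarith, by linarith, by linarith, by linarith⟩),
      Finset.card_insert_of_notMem (by
        simp only [Finset.mem_insert, Finset.mem_singleton]
        push_neg
        refine ⟨by linarith, by linarith, by linarith, by linarith⟩),
      Finset.card_insert_of_notMem (by
        simp only [Finset.mem_insert, Finset.mem_singleton]
        push_neg
        refine ⟨by linarith, by linarith, by linarith⟩),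
      Finset.card_insert_of_notMem (by
        simp only [Finset.mem_insert, Finset.mem_singleton]
        push_neg
        refine ⟨by linarith, by linarith⟩),
      Finset.card_insert_of_notMem (by
        simp only [Finset.mem_singleton]
        exact ne_of_lt h56),
      Finset.card_singleton]
  rw [← Multiset.toFinset_card_of_nodup Rpoly_nodup, hTF, hcardS]
lemma Rmap_ne_zero : Rpoly.map (algebraMap ℝ ℂ) ≠ 0 := (Rpoly_monic.map _).ne_zero

lemma Rmap_roots_card : (Rpoly.map (algebraMap ℝ ℂ)).roots.card = 8 := by
  have h := Polynomial.Splits.natDegree_eq_card_roots (IsAlgClosed.splits (Rpoly.map (algebraMap ℝ ℂ)))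
  rw [← h, Polynomial.natDegree_map, Rpoly_natDegree]

lemma conj_root_mem {z : ℂ} (hz : z ∈ (Rpoly.map (algebraMap ℝ ℂ)).roots) :
    (starRingEnd ℂ) z ∈ (Rpoly.map (algebraMap ℝ ℂ)).roots := by
  have hz0 : (Rpoly.map (algebraMap ℝ ℂ)).eval z = 0 := (Polynomial.mem_roots'.mp hz).2
  have hcomp : (starRingEnd ℂ).comp (algebraMap ℝ ℂ) = algebraMap ℝ ℂ := by
    ext r; simp
  refine Polynomial.mem_roots'.mpr ⟨Rmap_ne_zero, ?_⟩
  show (Rpoly.map (algebraMap ℝ ℂ)).eval ((starRingEnd ℂ) z) = 0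
  calc (Rpoly.map (algebraMap ℝ ℂ)).eval ((starRingEnd ℂ) z)
      = Polynomial.eval₂ (algebraMap ℝ ℂ) ((starRingEnd ℂ) z) Rpoly := Polynomial.eval_map _ _
    _ = Polynomial.eval₂ ((starRingEnd ℂ).comp (algebraMap ℝ ℂ)) ((starRingEnd ℂ) z) Rpoly := by
        rw [hcomp]
    _ = (starRingEnd ℂ) (Polynomial.eval₂ (algebraMap ℝ ℂ) z Rpoly) :=
        (Polynomial.hom_eval₂ _ _ _ _).symm
    _ = (starRingEnd ℂ) ((Rpoly.map (algebraMap ℝ ℂ)).eval z) := by rw [Polynomial.eval_map]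
    _ = 0 := by rw [hz0, map_zero]

lemma filter_real_roots :
    Multiset.filter (fun z : ℂ => z.im = 0) (Rpoly.map (algebraMap ℝ ℂ)).roots
      = Multiset.map (fun r : ℝ => (r : ℂ)) Rpoly.roots := by
  classical
  ext z
  by_cases hz : z.im = 0
  · rw [Multiset.count_filter_of_pos (p := fun z : ℂ => z.im = 0) hz]
    have hzre : ((z.re : ℝ) : ℂ) = z := Complex.ext rfl (by simp [hz])
    have hinj : Function.Injective (fun r : ℝ => (r : ℂ)) := Complex.ofReal_injective
    calc Multiset.count z (Rpoly.map (algebraMap ℝ ℂ)).roots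
        = Polynomial.rootMultiplicity z (Rpoly.map (algebraMap ℝ ℂ)) :=
          Polynomial.count_roots _
      _ = Polynomial.rootMultiplicity (algebraMap ℝ ℂ z.re) (Rpoly.map (algebraMap ℝ ℂ)) := by
          rw [show algebraMap ℝ ℂ z.re = z from hzre]
      _ = Polynomial.rootMultiplicity z.re Rpoly :=
          (Polynomial.eq_rootMultiplicity_map (algebraMap ℝ ℂ).injective z.re).symm
      _ = Multiset.count z.re Rpoly.roots := (Polynomial.count_roots _).symm
      _ = Multiset.count ((fun r : ℝ => (r : ℂ)) z.re) (Multiset.map (fun r : ℝ => (r : ℂ)) Rpoly.roots) :=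
          (Multiset.count_map_eq_count' _ _ hinj _).symm
      _ = Multiset.count z (Multiset.map (fun r : ℝ => (r : ℂ)) Rpoly.roots) := by
          show Multiset.count ((z.re : ℝ) : ℂ) (Multiset.map (fun r : ℝ => (r : ℂ)) Rpoly.roots)
            = Multiset.count z (Multiset.map (fun r : ℝ => (r : ℂ)) Rpoly.roots)
          rw [hzre]
  · rw [Multiset.count_filter_of_neg (p := fun z : ℂ => z.im = 0) hz]
    symm
    rw [Multiset.count_eq_zero]
    intro hmem
    obtain ⟨r, _, rfl⟩ := Multiset.mem_map.mp hmem
    exact hz (Complex.ofReal_im r)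

/-- `R(x)` has exactly six real roots, all simple; consequently, over `ℂ` it
has exactly two non-real roots, which form a conjugate pair. -/
theorem Rpoly_six_real_roots :
    Rpoly.roots.card = 6 ∧ Rpoly.roots.Nodup ∧
    ((Rpoly.map (algebraMap ℝ ℂ)).roots.filter fun z => z.im ≠ 0).card = 2 ∧
    ∀ z ∈ (Rpoly.map (algebraMap ℝ ℂ)).roots, z.im ≠ 0 →
      (starRingEnd ℂ) z ∈ (Rpoly.map (algebraMap ℝ ℂ)).roots := by
  refine ⟨roots_card_six, Rpoly_nodup, ?_, fun z hz _ => conj_root_mem hz⟩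
  classical
  have hsplit := Multiset.filter_add_not (fun z : ℂ => z.im = 0) (Rpoly.map (algebraMap ℝ ℂ)).roots
  have hcard := congrArg Multiset.card hsplit
  rw [Multiset.card_add] at hcard
  have h6 : (Multiset.filter (fun z : ℂ => z.im = 0) (Rpoly.map (algebraMap ℝ ℂ)).roots).card = 6 := by
    rw [filter_real_roots, Multiset.card_map, roots_card_six]
  have heq : Multiset.filter (fun z : ℂ => z.im ≠ 0) (Rpoly.map (algebraMap ℝ ℂ)).roots
      = Multiset.filter (fun z : ℂ => ¬ z.im = 0) (Rpoly.map (algebraMap ℝ ℂ)).roots := by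
    simp only [ne_eq]
  rw [heq]
  rw [h6, Rmap_roots_card] at hcard
  omega
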